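/- Let A be an n×m real matrix defining a two-player zero-sum game with value v, and let X* = { x in the probability simplex S_n : min_i (c_i)^T x = v } be Player 1's Nash equilibrium set, where c_i denotes the i-th column of A. If X* contains a relatively open (in the affine hull of S_n) nonempty subset of S_n, then there exists a column index i with c_i = v·1_n (all entries equal to v). -/
import Mathlib


/-- Payoff of Player 1's mixed strategy `x` against Player 2's pure action `i`
(the `i`-th column of `A` dotted with `x`). -/
noncomputable def colPay {n m : ℕ} (A : Matrix (Fin n) (Fin m) ℝ) (i : Fin m)
    (x : Fin n → ℝ) : ℝ := ∑ j, A j i * x j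

/-- `min_i (c_i)^T x`. -/
noncomputable def minPay {n m : ℕ} (A : Matrix (Fin n) (Fin (m + 1)) ℝ)
    (x : Fin n → ℝ) : ℝ :=
  Finset.univ.inf' Finset.univ_nonempty fun i => colPay A i x

theorem stmt3 {n m : ℕ} (A : Matrix (Fin (n + 1)) (Fin (m + 1)) ℝ) (v : ℝ)
    -- v is the value of the game
    (hub : ∀ x ∈ stdSimplex ℝ (Fin (n + 1)), minPay A x ≤ v)
    (hach : ∃ x ∈ stdSimplex ℝ (Fin (n + 1)), minPay A x = v)
    -- X* contains a nonempty subset of S_n that is open relative to the affine hull of S_n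
    (V : Set (Fin (n + 1) → ℝ)) (hV : IsOpen V)
    (hne : (V ∩ (affineSpan ℝ (stdSimplex ℝ (Fin (n + 1))) : Set (Fin (n + 1) → ℝ))).Nonempty)
    (hsub : V ∩ (affineSpan ℝ (stdSimplex ℝ (Fin (n + 1))) : Set (Fin (n + 1) → ℝ)) ⊆
      {x ∈ stdSimplex ℝ (Fin (n + 1)) | minPay A x = v}) :
    ∃ i : Fin (m + 1), ∀ j : Fin (n + 1), A j i = v := by
  obtain ⟨x₀, hx₀V, hx₀S⟩ := hne
  have hx₀ := hsub ⟨hx₀V, hx₀S⟩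
  obtain ⟨hx₀simplex, hx₀v⟩ := hx₀
  -- pick the minimizing column at x₀
  obtain ⟨i, -, hi⟩ := Finset.exists_mem_eq_inf' (Finset.univ_nonempty)
    (fun i => colPay A i x₀)
  have hiv : colPay A i x₀ = v := by rw [← hx₀v, minPay, hi]
  refine ⟨i, ?_⟩
  -- key: colPay A i is constantly v on the affine span
  have key : ∀ y ∈ (affineSpan ℝ (stdSimplex ℝ (Fin (n + 1))) :
      Set (Fin (n + 1) → ℝ)), colPay A i y = v := by
    intro y hy
    set f : ℝ → (Fin (n + 1) → ℝ) := fun t => x₀ + t • (y - x₀) with hf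
    have hfc : Continuous f := by fun_prop
    have hf0 : f 0 ∈ V := by simp [hf, hx₀V]
    have hopen : IsOpen (f ⁻¹' V) := hV.preimage hfc
    obtain ⟨ε, hε, hball⟩ := Metric.isOpen_iff.1 hopen 0 hf0
    -- for small |t|, f t is in V ∩ affineSpan, hence colPay ≥ v there
    have hmem : ∀ t : ℝ, |t| < ε → colPay A i (f t) ≥ v := by
      intro t ht
      have h1 : f t ∈ V := hball (by simpa [Real.dist_eq] using ht)
      have h2 : f t ∈ (affineSpan ℝ (stdSimplex ℝ (Fin (n + 1))) :
          Set (Fin (n + 1) → ℝ)) := by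
        have := AffineSubspace.smul_vsub_vadd_mem
          (affineSpan ℝ (stdSimplex ℝ (Fin (n + 1)))) t hy hx₀S hx₀S
        simpa [hf, vsub_eq_sub, vadd_eq_add, add_comm] using this
      have h3 := hsub ⟨h1, h2⟩
      have : minPay A (f t) = v := h3.2
      rw [← this]
      exact Finset.inf'_le _ (Finset.mem_univ i)
    have lin : ∀ t : ℝ, colPay A i (f t) = v + t * (colPay A i y - v) := by
      intro t
      simp only [hf, colPay, Pi.add_apply, Pi.smul_apply, Pi.sub_apply, smul_eq_mul]
      rw [← hiv]
      simp only [colPay, Finset.mul_sum, mul_sub]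
      rw [← Finset.sum_sub_distrib, ← Finset.sum_add_distrib]
      exact Finset.sum_congr rfl fun j _ => by ring
    have hpos := hmem (ε / 2) (by rw [abs_of_pos (by linarith)]; linarith)
    have hneg := hmem (-(ε / 2)) (by rw [abs_neg, abs_of_pos (by linarith)]; linarith)
    rw [lin] at hpos hneg
    nlinarith
  intro j
  have hmemS : (if j = · then (1 : ℝ) else 0) ∈ stdSimplex ℝ (Fin (n + 1)) :=
    ite_eq_mem_stdSimplex ℝ j
  have := key _ (subset_affineSpan ℝ _ hmemS)
  rw [colPay] at this
  simpa [Finset.sum_ite_eq' Finset.univ j, mul_ite] using this
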